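/- Let n ≥ 2, q ∈ ℂ \ {0}, p ∣ r with d = r/p, let ξ ∈ ℂ be a primitive p-th root of unity, let v_0,…,v_{d−1} ∈ ℂ be all nonzero, and define u_1,…,u_r by u_{lp+k+1} = ξ^k v_l for 0 ≤ k ≤ p−1, 0 ≤ l ≤ d−1 (so all u_j ≠ 0 and T_1 is a unit in ℋ_{r,1,n}(u_1,…,u_r,q)). Let τ be the algebra automorphism of ℋ_{r,1,n}(u_1,…,u_r,q) with τ(T_1) = ξ·T_1 and τ(T_i) = T_i for 2 ≤ i ≤ n. Then the fixed-point subalgebra {h ∈ ℋ_{r,1,n}(u_1,…,u_r,q) : τ(h) = h} equals the ℂ-subalgebra generated by the elements t_0 = T_1^p, t_1 = T_1^{−1}T_2T_1, and t_i = T_i for 2 ≤ i ≤ n. -/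

import Mathlib

/-!
STATEMENT 6: With n ≥ 2, q ≠ 0, r = pd, ξ a primitive p-th root of unity,
v_0,…,v_{d−1} all nonzero, u_{lp+k+1} = ξ^k v_l (so T_1 is a unit), and τ the
algebra automorphism of ℋ_{r,1,n}(u_1,…,u_r,q) with τ(T_1) = ξ·T_1 and
τ(T_i) = T_i for 2 ≤ i ≤ n, the fixed-point subalgebra {h : τ(h) = h} equals the
ℂ-subalgebra generated by t_0 = T_1^p, t_1 = T_1^{−1}T_2T_1 and t_i = T_i
(2 ≤ i ≤ n), i.e. Ariki's ℋ_{r,p,n}(v_0,…,v_{d−1},q).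
(`Ring.inverse` applied to the unit T_1 is its two-sided inverse T_1^{−1}.)
-/

noncomputable section

open FreeAlgebra
noncomputable section

open FreeAlgebra

/-- Defining relations of the cyclotomic Hecke algebra ℋ_{r,1,n}(u_1,…,u_r,q).
The generator `ι ℂ i` for `i : Fin n` represents `T_{i+1}`; `u j` denotes
`u_{j+1}` (0-indexed). -/
inductive CycloRel (n r : ℕ) (q : ℂ) (u : ℕ → ℂ) :
    FreeAlgebra ℂ (Fin n) → FreeAlgebra ℂ (Fin n) → Prop
  | comm (i j : Fin n) (h : (i : ℕ) + 1 < (j : ℕ)) :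
      CycloRel n r q u (ι ℂ i * ι ℂ j) (ι ℂ j * ι ℂ i)
  | braid (i j : Fin n) (hi : 1 ≤ (i : ℕ)) (hj : (j : ℕ) = (i : ℕ) + 1) :
      CycloRel n r q u (ι ℂ i * ι ℂ j * ι ℂ i) (ι ℂ j * ι ℂ i * ι ℂ j)
  | quartic (i j : Fin n) (hi : (i : ℕ) = 0) (hj : (j : ℕ) = 1) :
      CycloRel n r q u (ι ℂ i * ι ℂ j * ι ℂ i * ι ℂ j) (ι ℂ j * ι ℂ i * ι ℂ j * ι ℂ i)
  | cyclotomic (i : Fin n) (hi : (i : ℕ) = 0) :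
      CycloRel n r q u
        (((List.range r).map (fun k => ι ℂ i - algebraMap ℂ (FreeAlgebra ℂ (Fin n)) (u k))).prod) 0
  | quadratic (i : Fin n) (hi : 1 ≤ (i : ℕ)) :
      CycloRel n r q u ((ι ℂ i - 1) * (ι ℂ i + algebraMap ℂ (FreeAlgebra ℂ (Fin n)) q)) 0

/-- The cyclotomic Hecke algebra ℋ_{r,1,n}(u_1,…,u_r,q). -/
abbrev CyclotomicHecke (n r : ℕ) (q : ℂ) (u : ℕ → ℂ) :=
  RingQuot (CycloRel n r q u)

/-- The generator `T_{i+1}` of the cyclotomic Hecke algebra (`heckeT … 0 = T_1`). -/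
def heckeT (n r : ℕ) (q : ℂ) (u : ℕ → ℂ) (i : Fin n) : CyclotomicHecke n r q u :=
  RingQuot.mkAlgHom ℂ (CycloRel n r q u) (ι ℂ i)

-- sanity checks

lemma prodLinear {A : Type*} [Ring A] [Algebra ℂ A] (x : A) (l : List ℂ) :
    ∃ g : A, Commute x g ∧
      (l.map (fun a => x - algebraMap ℂ A a)).prod
        = x * g + algebraMap ℂ A (l.map (fun a => -a)).prod := by
  induction l with
  | nil => exact ⟨0, Commute.zero_right x, by simp⟩
  | cons a l ih =>
    obtain ⟨g, hc, hg⟩ := ih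
    have hca : Commute x (algebraMap ℂ A a) := (Algebra.commutes a x).symm
    have hcm : Commute x (algebraMap ℂ A (l.map (fun a => -a)).prod) :=
      (Algebra.commutes _ x).symm
    refine ⟨x * g + algebraMap ℂ A (l.map (fun a => -a)).prod - algebraMap ℂ A a * g, ?_, ?_⟩
    · exact (((Commute.refl x).mul_right hc).add_right hcm).sub_right (hca.mul_right hc)
    · simp only [List.map_cons, List.prod_cons, hg]
      rw [sub_mul, mul_add, mul_add, map_mul, map_neg]
      rw [mul_sub, mul_add]
      rw [← mul_assoc x (algebraMap ℂ A a) g, hca.eq, neg_mul]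
      simp only [mul_assoc]
      abel


theorem cyclotomicHecke_fixed_subalgebra
    (n p d r : ℕ) (hn : 2 ≤ n) (hp : 1 ≤ p) (hr : r = p * d)
    (q : ℂ) (hq : q ≠ 0)
    (ξ : ℂ) (hξ : IsPrimitiveRoot ξ p)
    (v : ℕ → ℂ) (hv : ∀ l < d, v l ≠ 0)
    (u : ℕ → ℂ)
    (hu : ∀ k l : ℕ, k < p → l < d → u (l * p + k) = ξ ^ k * v l)
    (τ : CyclotomicHecke n r q u ≃ₐ[ℂ] CyclotomicHecke n r q u)
    (hτ1 : τ (heckeT n r q u ⟨0, by omega⟩) = ξ • heckeT n r q u ⟨0, by omega⟩)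
    (hτi : ∀ i : Fin n, 1 ≤ (i : ℕ) → τ (heckeT n r q u i) = heckeT n r q u i) :
    ∀ h : CyclotomicHecke n r q u, τ h = h ↔
      h ∈ Algebra.adjoin ℂ
        (insert ((heckeT n r q u ⟨0, by omega⟩) ^ p)
          (insert (Ring.inverse (heckeT n r q u ⟨0, by omega⟩) *
              heckeT n r q u ⟨1, by omega⟩ * heckeT n r q u ⟨0, by omega⟩)
            {x | ∃ i : Fin n, 1 ≤ (i : ℕ) ∧ x = heckeT n r q u i})) := by
  set A := CyclotomicHecke n r q u with hA
  set T1 : A := heckeT n r q u ⟨0, by omega⟩ with hT1def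
  set T2 : A := heckeT n r q u ⟨1, by omega⟩ with hT2def
  -- relations
  have relQuartic : T1 * T2 * T1 * T2 = T2 * T1 * T2 * T1 := by
    have h := RingQuot.mkAlgHom_rel ℂ
      (CycloRel.quartic (n := n) (r := r) (q := q) (u := u) ⟨0, by omega⟩ ⟨1, by omega⟩ rfl rfl)
    simpa [heckeT, map_mul, hT1def, hT2def] using h
  have relComm : ∀ i : Fin n, 2 ≤ (i : ℕ) → T1 * heckeT n r q u i = heckeT n r q u i * T1 := by
    intro i hi
    have h := RingQuot.mkAlgHom_rel ℂ
      (CycloRel.comm (n := n) (r := r) (q := q) (u := u) ⟨0, by omega⟩ i (by simp; omega))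
    simpa [heckeT, map_mul, hT1def] using h
  have relQuad2 : (T2 - 1) * (T2 + algebraMap ℂ A q) = 0 := by
    have h := RingQuot.mkAlgHom_rel ℂ
      (CycloRel.quadratic (n := n) (r := r) (q := q) (u := u) ⟨1, by omega⟩ (by simp))
    simpa [heckeT, map_mul, map_sub, map_add, map_one, hT2def] using h
  have hcyc : ((List.range r).map (fun k => T1 - algebraMap ℂ A (u k))).prod = 0 := by
    have h := RingQuot.mkAlgHom_rel ℂ
      (CycloRel.cyclotomic (n := n) (r := r) (q := q) (u := u) ⟨0, by omega⟩ rfl)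
    rw [map_zero, map_list_prod, List.map_map] at h
    simpa [heckeT, Function.comp_def, map_sub, hT1def] using h
  -- u nonzero
  have hξ0 : ξ ≠ 0 := by
    intro h0
    have := hξ.pow_eq_one
    rw [h0, zero_pow (by omega)] at this
    exact one_ne_zero this.symm
  have hu0 : ∀ k < r, u k ≠ 0 := by
    intro k hk
    have hkp : k % p < p := Nat.mod_lt _ (by omega)
    have hkd : k / p < d := Nat.div_lt_of_lt_mul (by omega)
    have he : k / p * p + k % p = k := by
      rw [mul_comm]; exact Nat.div_add_mod k p
    have := hu (k % p) (k / p) hkp hkd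
    rw [he] at this
    rw [this]
    exact mul_ne_zero (pow_ne_zero _ hξ0) (hv _ hkd)
  -- IsUnit T1
  obtain ⟨g, hgc, hgE⟩ := prodLinear T1 ((List.range r).map u)
  rw [List.map_map] at hgE
  simp only [Function.comp_def] at hgE
  rw [hcyc] at hgE
  have hgE' : (0 : A) = T1 * g + algebraMap ℂ A ((List.range r).map u |>.map (fun a => -a)).prod :=
    hgE
  set m : ℂ := ((List.range r).map u |>.map (fun a => -a)).prod with hm
  have hm0 : m ≠ 0 := by
    apply List.prod_ne_zero
    intro h0
    simp only [List.mem_map, List.mem_range] at h0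
    obtain ⟨_, ⟨k, hk, rfl⟩, hzero⟩ := h0
    exact hu0 k hk (by simpa using hzero.symm)
  set T1inv : A := (-m⁻¹) • g with hT1invdef
  have h3 : T1 * g = -(algebraMap ℂ A m) := eq_neg_of_add_eq_zero_left hgE'.symm
  have hT1mul : T1 * T1inv = 1 := by
    rw [hT1invdef, mul_smul_comm, h3, smul_neg, neg_smul, neg_neg, Algebra.smul_def, ← map_mul,
      inv_mul_cancel₀ hm0, map_one]
  have hT1mul' : T1inv * T1 = 1 := by
    rw [hT1invdef, smul_mul_assoc, ← hgc.eq, ← mul_smul_comm, ← hT1invdef, hT1mul]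
  set U : Aˣ := ⟨T1, T1inv, hT1mul, hT1mul'⟩ with hU
  have hUnit : IsUnit T1 := ⟨U, rfl⟩
  have hRinv : Ring.inverse T1 = T1inv := Ring.inverse_unit U
  have hTi : T1 * Ring.inverse T1 = 1 := by rw [hRinv]; exact hT1mul
  have hiT : Ring.inverse T1 * T1 = 1 := by rw [hRinv]; exact hT1mul'
  set Ti : A := Ring.inverse T1 with hTidef
  set t1 : A := Ti * T2 * T1 with ht1def
  set Sset : Set A := insert (T1 ^ p)
    (insert t1 {x | ∃ i : Fin n, 1 ≤ (i : ℕ) ∧ x = heckeT n r q u i}) with hSset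
  set S' : Subalgebra ℂ A := Algebra.adjoin ℂ Sset with hS'
  -- basic unit juggling
  have hA1 : ∀ x : A, T1 * (Ti * x) = x := fun x => by rw [← mul_assoc, hTi, one_mul]
  have hA2 : ∀ x : A, Ti * (T1 * x) = x := fun x => by rw [← mul_assoc, hiT, one_mul]
  -- membership of basic generators
  have hT0S : T1 ^ p ∈ S' := Algebra.subset_adjoin (Set.mem_insert _ _)
  have ht1S : t1 ∈ S' := Algebra.subset_adjoin (Set.mem_insert_iff.mpr
    (Or.inr (Set.mem_insert _ _)))
  have hTgenS : ∀ i : Fin n, 1 ≤ (i : ℕ) → heckeT n r q u i ∈ S' := fun i hi =>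
    Algebra.subset_adjoin (Set.mem_insert_iff.mpr (Or.inr (Set.mem_insert_iff.mpr
      (Or.inr ⟨i, hi, rfl⟩))))
  have hT2S : T2 ∈ S' := hTgenS ⟨1, by omega⟩ (by simp)
  -- quadratic relation for t1 and its inverse
  have e1 : t1 - 1 = Ti * (T2 - 1) * T1 := by
    rw [mul_sub, sub_mul, mul_one, ht1def, hiT]
  have eC : Ti * algebraMap ℂ A q * T1 = algebraMap ℂ A q := by
    rw [mul_assoc, Algebra.commutes q T1, hA2]
  have e2 : t1 + algebraMap ℂ A q = Ti * (T2 + algebraMap ℂ A q) * T1 := by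
    rw [mul_add, add_mul, eC, ht1def]
  have hquadt1 : (t1 - 1) * (t1 + algebraMap ℂ A q) = 0 := by
    rw [e1, e2]
    have : Ti * (T2 - 1) * T1 * (Ti * (T2 + algebraMap ℂ A q) * T1)
        = Ti * ((T2 - 1) * (T2 + algebraMap ℂ A q)) * T1 := by
      simp only [mul_assoc]
      rw [hA1]
    rw [this, relQuad2, mul_zero, zero_mul]
  set tinv : A := q⁻¹ • (t1 + algebraMap ℂ A (q - 1)) with htinvdef
  have htinvS : tinv ∈ S' := Subalgebra.smul_mem _
    (Subalgebra.add_mem _ ht1S (Subalgebra.algebraMap_mem _ _)) _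
  have hexp : t1 * (t1 + algebraMap ℂ A (q - 1)) = algebraMap ℂ A q := by
    have h := hquadt1
    rw [sub_mul, one_mul, sub_eq_zero] at h
    rw [map_sub, map_one, ← add_sub_assoc, mul_sub, mul_one, h]
    abel
  have hexp' : (t1 + algebraMap ℂ A (q - 1)) * t1 = algebraMap ℂ A q := by
    rw [← hexp]
    exact ((Commute.refl t1).add_right (Algebra.commutes _ _).symm).symm.eq
  have ht1tinv : t1 * tinv = 1 := by
    rw [htinvdef, mul_smul_comm, hexp, Algebra.smul_def, ← map_mul,
      inv_mul_cancel₀ hq, map_one]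
  have htinvt1 : tinv * t1 = 1 := by
    rw [htinvdef, smul_mul_assoc, hexp', Algebra.smul_def, ← map_mul,
      inv_mul_cancel₀ hq, map_one]
  -- the conjugation algebra homomorphism
  set c : A →ₐ[ℂ] A :=
    { toFun := fun x => Ti * x * T1
      map_one' := by show Ti * 1 * T1 = 1; rw [mul_one, hiT]
      map_mul' := fun x y => by
        show Ti * (x * y) * T1 = Ti * x * T1 * (Ti * y * T1)
        simp only [mul_assoc]
        rw [hA1]
      map_zero' := by show Ti * 0 * T1 = 0; rw [mul_zero, zero_mul]
      map_add' := fun x y => by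
        show Ti * (x + y) * T1 = Ti * x * T1 + Ti * y * T1
        rw [mul_add, add_mul]
      commutes' := fun s => by
        show Ti * algebraMap ℂ A s * T1 = algebraMap ℂ A s
        rw [mul_assoc, Algebra.commutes s T1, hA2] } with hcdef
  have hcapply : ∀ x : A, c x = Ti * x * T1 := fun x => rfl
  have relQ' : T2 * (T1 * (T2 * T1)) = T1 * (T2 * (T1 * T2)) := by
    have := relQuartic.symm
    simpa [mul_assoc] using this
  have hct1t1 : c t1 * t1 = t1 * T2 := by
    rw [hcapply, ht1def]
    simp only [mul_assoc]
    rw [hA1, relQ', hA2]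
  have hct1 : c t1 = t1 * T2 * tinv := by
    calc c t1 = c t1 * (t1 * tinv) := by rw [ht1tinv, mul_one]
    _ = c t1 * t1 * tinv := (mul_assoc _ _ _).symm
    _ = t1 * T2 * tinv := by rw [hct1t1]
  have hcS : ∀ x ∈ S', c x ∈ S' := by
    have hle : S' ≤ Subalgebra.comap c S' := by
      rw [hS']
      apply Algebra.adjoin_le
      intro s hs
      show c s ∈ Algebra.adjoin ℂ Sset
      rcases hs with rfl | rfl | ⟨i, hi, rfl⟩
      · have : c (T1 ^ p) = T1 ^ p := by
          rw [hcapply, mul_assoc, ← pow_succ, pow_succ', hA2]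
        rw [this]; exact hT0S
      · rw [hct1]
        exact Subalgebra.mul_mem _ (Subalgebra.mul_mem _ ht1S hT2S) htinvS
      · rcases Nat.lt_or_ge (i : ℕ) 2 with h2 | h2
        · have hieq : heckeT n r q u i = T2 := by
            rw [hT2def]
            congr 1
            apply Fin.ext
            simp only []
            omega
          rw [hieq]
          exact ht1S
        · have : c (heckeT n r q u i) = heckeT n r q u i := by
            rw [hcapply, mul_assoc, ← relComm i h2, ← mul_assoc, hiT, one_mul]
          rw [this]
          exact hTgenS i hi
    exact fun x hx => (Subalgebra.mem_comap _ _ _).mp (hle hx)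
  -- τ facts
  have hξp : ξ ^ p = 1 := hξ.pow_eq_one
  have hp0 : (p : ℂ) ≠ 0 := Nat.cast_ne_zero.mpr (by omega)
  have hτT2 : τ T2 = T2 := hτi ⟨1, by omega⟩ (by simp)
  have hτTi : τ Ti = ξ⁻¹ • Ti := by
    have h1 : τ T1 * τ Ti = 1 := by rw [← map_mul, hTi, map_one]
    have h2 : (ξ⁻¹ • Ti) * τ T1 = 1 := by
      rw [hτ1, smul_mul_assoc, mul_smul_comm, smul_smul, inv_mul_cancel₀ hξ0, one_smul, hiT]
    calc τ Ti = (ξ⁻¹ • Ti) * τ T1 * τ Ti := by rw [h2, one_mul]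
    _ = (ξ⁻¹ • Ti) * (τ T1 * τ Ti) := mul_assoc _ _ _
    _ = ξ⁻¹ • Ti := by rw [h1, mul_one]
  have hτfix : ∀ s ∈ Sset, τ s = s := by
    intro s hs
    rcases hs with rfl | rfl | ⟨i, hi, rfl⟩
    · rw [map_pow, hτ1, smul_pow, hξp, one_smul]
    · rw [ht1def, map_mul, map_mul, hτTi, hτT2, hτ1]
      rw [smul_mul_assoc, smul_mul_assoc, mul_smul_comm, smul_smul, inv_mul_cancel₀ hξ0,
        one_smul]
    · exact hτi i hi
  have hfwd : ∀ x ∈ S', τ x = x := by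
    have hle : S' ≤ AlgHom.equalizer (τ : A →ₐ[ℂ] A) (AlgHom.id ℂ A) := by
      rw [hS']
      exact Algebra.adjoin_le fun s hs => hτfix s hs
    exact fun x hx => hle hx
  -- the module spanned by T1 ^ j * S'
  set Wset : Set A := {x | ∃ j : ℕ, ∃ s ∈ S', x = T1 ^ j * s} with hWset
  set W : Submodule ℂ A := Submodule.span ℂ Wset with hW
  have hswap : ∀ (k : ℕ) (s : A), s ∈ S' → ∃ s' ∈ S', s * T1 ^ k = T1 ^ k * s' := by
    intro k
    induction k with
    | zero => exact fun s hs => ⟨s, hs, by rw [pow_zero, one_mul, mul_one]⟩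
    | succ k ih =>
      intro s hs
      obtain ⟨s', hs', he⟩ := ih (c s) (hcS s hs)
      refine ⟨s', hs', ?_⟩
      have h1 : s * T1 = T1 * c s := by
        rw [hcapply, mul_assoc Ti s T1, hA1]
      rw [pow_succ', ← mul_assoc, h1, mul_assoc, he, ← mul_assoc]
  have hWmulset : ∀ x ∈ Wset, ∀ y ∈ Wset, x * y ∈ Wset := by
    rintro x ⟨j, s, hs, rfl⟩ y ⟨k, t, ht, rfl⟩
    obtain ⟨s', hs', he⟩ := hswap k s hs
    refine ⟨j + k, s' * t, Subalgebra.mul_mem _ hs' ht, ?_⟩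
    rw [pow_add]
    calc T1 ^ j * s * (T1 ^ k * t) = T1 ^ j * (s * T1 ^ k) * t := by simp only [mul_assoc]
    _ = T1 ^ j * (T1 ^ k * s') * t := by rw [he]
    _ = T1 ^ j * T1 ^ k * (s' * t) := by simp only [mul_assoc]
  have hWmul : ∀ a ∈ W, ∀ b ∈ W, a * b ∈ W := by
    intro a ha b hb
    have hle : W * W ≤ W := by
      rw [hW, Submodule.span_mul_span]
      apply Submodule.span_le.mpr
      rintro x hx
      rw [Set.mem_mul] at hx
      obtain ⟨y, hy, z, hz, rfl⟩ := hx
      exact Submodule.subset_span (hWmulset y hy z hz)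
    exact hle (Submodule.mul_mem_mul ha hb)
  have hWtop : ∀ x : A, x ∈ W := by
    intro x
    obtain ⟨y, hy⟩ := RingQuot.mkAlgHom_surjective ℂ (CycloRel n r q u) x
    rw [← hy]
    clear hy
    induction y using FreeAlgebra.induction with
    | grade0 s =>
      rw [AlgHom.commutes, Algebra.algebraMap_eq_smul_one]
      exact Submodule.smul_mem W s (Submodule.subset_span
        ⟨0, 1, Subalgebra.one_mem _, by rw [pow_zero, one_mul]⟩)
    | grade1 i =>
      show heckeT n r q u i ∈ W
      rcases Nat.eq_zero_or_pos (i : ℕ) with h0 | h1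
      · have hieq : heckeT n r q u i = T1 := by
          rw [hT1def]
          congr 1
          apply Fin.ext
          simpa using h0
        rw [hieq]
        exact Submodule.subset_span ⟨1, 1, Subalgebra.one_mem _, by rw [pow_one, mul_one]⟩
      · exact Submodule.subset_span ⟨0, heckeT n r q u i, hTgenS i h1, by rw [pow_zero, one_mul]⟩
    | mul a b ha hb =>
      rw [map_mul]
      exact hWmul _ ha _ hb
    | add a b ha hb =>
      rw [map_add]
      exact Submodule.add_mem _ ha hb
  -- the averaging operator
  set L : A →ₗ[ℂ] A := (τ : A ≃ₐ[ℂ] A).toLinearMap with hL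
  have hLapply : ∀ x : A, L x = τ x := fun x => rfl
  have hLpow_fix : ∀ (k : ℕ) (x : A), τ x = x → (L ^ k) x = x := by
    intro k
    induction k with
    | zero => intro x _; rw [pow_zero, Module.End.one_apply]
    | succ k ih =>
      intro x hx
      rw [pow_succ, Module.End.mul_apply, hLapply, hx, ih x hx]
  have hLpow_eig : ∀ (j k : ℕ) (s : A), s ∈ S' →
      (L ^ k) (T1 ^ j * s) = (ξ ^ j) ^ k • (T1 ^ j * s) := by
    intro j k
    induction k with
    | zero => intro s _; rw [pow_zero, Module.End.one_apply, pow_zero, one_smul]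
    | succ k ih =>
      intro s hs
      have h1 : L (T1 ^ j * s) = ξ ^ j • (T1 ^ j * s) := by
        rw [hLapply, map_mul, map_pow, hτ1, hfwd s hs, smul_pow, smul_mul_assoc]
      rw [pow_succ, Module.End.mul_apply, h1, map_smul, ih s hs, smul_smul, ← pow_succ']
  set π0 : A →ₗ[ℂ] A := (p : ℂ)⁻¹ • ∑ k ∈ Finset.range p, L ^ k with hπ0
  have hπ0apply : ∀ x : A, π0 x = (p : ℂ)⁻¹ • ∑ k ∈ Finset.range p, (L ^ k) x := by
    intro x
    rw [hπ0, LinearMap.smul_apply, LinearMap.coe_sum, Finset.sum_apply]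
  have hπ0W : ∀ x ∈ W, π0 x ∈ Subalgebra.toSubmodule S' := by
    have hle : W ≤ (Subalgebra.toSubmodule S').comap π0 := by
      rw [hW]
      apply Submodule.span_le.mpr
      rintro x ⟨j, s, hs, rfl⟩
      show π0 (T1 ^ j * s) ∈ Subalgebra.toSubmodule S'
      rw [hπ0apply]
      by_cases hdvd : p ∣ j
      · have hx1 : ξ ^ j = 1 := (hξ.pow_eq_one_iff_dvd j).mpr hdvd
        have hsum : ∑ k ∈ Finset.range p, (L ^ k) (T1 ^ j * s) = (p : ℂ) • (T1 ^ j * s) := by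
          rw [Finset.sum_congr rfl
            (fun k _ => by rw [hLpow_eig j k s hs, hx1, one_pow, one_smul])]
          rw [Finset.sum_const, Finset.card_range, ← Nat.cast_smul_eq_nsmul ℂ]
        rw [hsum, smul_smul, inv_mul_cancel₀ hp0, one_smul]
        show T1 ^ j * s ∈ S'
        obtain ⟨e, rfl⟩ := hdvd
        rw [pow_mul]
        exact Subalgebra.mul_mem _ (Subalgebra.pow_mem _ hT0S e) hs
      · have hξj1 : ξ ^ j ≠ 1 := fun hone => hdvd ((hξ.pow_eq_one_iff_dvd j).mp hone)
        have hsum0 : ∑ k ∈ Finset.range p, (ξ ^ j) ^ k = 0 := by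
          rw [geom_sum_eq hξj1, ← pow_mul, mul_comm j p, pow_mul, hξp, one_pow, sub_self,
            zero_div]
        have hsum : ∑ k ∈ Finset.range p, (L ^ k) (T1 ^ j * s) = 0 := by
          rw [Finset.sum_congr rfl (fun k _ => hLpow_eig j k s hs), ← Finset.sum_smul, hsum0,
            zero_smul]
        rw [hsum, smul_zero]
        exact Subalgebra.zero_mem _
    exact fun x hx => hle hx
  -- conclusion
  intro h
  constructor
  · intro hfix
    have h1 : π0 h = h := by
      rw [hπ0apply, Finset.sum_congr rfl (fun k _ => hLpow_fix k h hfix), Finset.sum_const,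
        Finset.card_range, ← Nat.cast_smul_eq_nsmul ℂ, smul_smul, inv_mul_cancel₀ hp0, one_smul]
    have h2 := hπ0W h (hWtop h)
    rw [h1] at h2
    exact h2
  · intro hmem
    exact hfwd h hmem
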